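/- The Grassmannian constant μ_{5,2}(ℂ) equals 1/√2: every set of 5 unit vectors in ℂ^2 has coherence max_{j ≠ l} |⟨φ_j, φ_l⟩| ≥ 1/√2, and there exists a set of 5 unit vectors in ℂ^2 whose coherence equals exactly 1/√2. -/

import Mathlib

def dot3 (a b : ℝ × ℝ × ℝ) : ℝ := a.1 * b.1 + a.2.1 * b.2.1 + a.2.2 * b.2.2

def cross3 (a b : ℝ × ℝ × ℝ) : ℝ × ℝ × ℝ :=
  (a.2.1 * b.2.2 - a.2.2 * b.2.1, a.2.2 * b.1 - a.1 * b.2.2, a.1 * b.2.1 - a.2.1 * b.1)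

lemma dot3_comm (a b : ℝ × ℝ × ℝ) : dot3 a b = dot3 b a := by
  simp only [dot3]; ring

lemma dot3_self_nonneg (a : ℝ × ℝ × ℝ) : 0 ≤ dot3 a a := by
  simp only [dot3]
  nlinarith [sq_nonneg a.1, sq_nonneg a.2.1, sq_nonneg a.2.2]

lemma dot3_cs (a b : ℝ × ℝ × ℝ) : dot3 a b ^ 2 ≤ dot3 a a * dot3 b b := by
  obtain ⟨a1, a2, a3⟩ := a; obtain ⟨b1, b2, b3⟩ := b
  simp only [dot3]
  nlinarith [sq_nonneg (a1*b2 - a2*b1), sq_nonneg (a1*b3 - a3*b1), sq_nonneg (a2*b3 - a3*b2)]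

lemma det_identity (u u' a b : ℝ × ℝ × ℝ) (h1 : dot3 u a = 0) (h2 : dot3 u b = 0)
    (h3 : dot3 u' a = 0) (h4 : dot3 u' b = 0) (h5 : dot3 a b = 0) :
    dot3 u u' * (dot3 a a * dot3 b b) = dot3 u (cross3 a b) * dot3 u' (cross3 a b) := by
  obtain ⟨u1, u2, u3⟩ := u; obtain ⟨v1, v2, v3⟩ := u'
  obtain ⟨a1, a2, a3⟩ := a; obtain ⟨b1, b2, b3⟩ := b
  simp only [dot3, cross3] at *
  linear_combination ((u1*v1+u2*v2+u3*v3) * (a1*b1+a2*b2+a3*b3)) * h5 +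
    ((b1*b1+b2*b2+b3*b3) * (v1*a1+v2*a2+v3*a3) -
      (a1*b1+a2*b2+a3*b3) * (v1*b1+v2*b2+v3*b3)) * h1 +
    (-((v1*a1+v2*a2+v3*a3) * (a1*b1+a2*b2+a3*b3)) +
      (a1*a1+a2*a2+a3*a3) * (v1*b1+v2*b2+v3*b3)) * h2

lemma line_case (u1 u2 u3 a b : ℝ × ℝ × ℝ)
    (ha : 0 < dot3 a a) (hb : 0 < dot3 b b) (hab : dot3 a b = 0)
    (h1a : dot3 u1 a = 0) (h1b : dot3 u1 b = 0)
    (h2a : dot3 u2 a = 0) (h2b : dot3 u2 b = 0)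
    (h3a : dot3 u3 a = 0) (h3b : dot3 u3 b = 0)
    (h12 : dot3 u1 u2 < 0) (h13 : dot3 u1 u3 < 0) (h23 : dot3 u2 u3 < 0) : False := by
  set c := cross3 a b with hc
  set P := dot3 a a * dot3 b b with hP
  have e12 : dot3 u1 u2 * P = dot3 u1 c * dot3 u2 c := det_identity u1 u2 a b h1a h1b h2a h2b hab
  have e13 : dot3 u1 u3 * P = dot3 u1 c * dot3 u3 c := det_identity u1 u3 a b h1a h1b h3a h3b hab
  have e23 : dot3 u2 u3 * P = dot3 u2 c * dot3 u3 c := det_identity u2 u3 a b h2a h2b h3a h3b hab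
  have hpos : 0 < P := mul_pos ha hb
  have key : (dot3 u1 u2 * P) * ((dot3 u1 u3 * P) * (dot3 u2 u3 * P)) =
      (dot3 u1 c * dot3 u2 c) * ((dot3 u1 c * dot3 u3 c) * (dot3 u2 c * dot3 u3 c)) := by
    rw [e12, e13, e23]
  have hneg : dot3 u1 u2 * (dot3 u1 u3 * dot3 u2 u3) < 0 :=
    mul_neg_of_neg_of_pos h12 (mul_pos_of_neg_of_neg h13 h23)
  nlinarith [key, hneg, mul_pos hpos (mul_pos hpos hpos),
    sq_nonneg (dot3 u1 c * (dot3 u2 c * dot3 u3 c)),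
    mul_neg_of_neg_of_pos hneg (mul_pos hpos (mul_pos hpos hpos))]

noncomputable def proj3 (v w : ℝ × ℝ × ℝ) : ℝ × ℝ × ℝ :=
  (v.1 - (dot3 v w / dot3 w w) * w.1, v.2.1 - (dot3 v w / dot3 w w) * w.2.1,
   v.2.2 - (dot3 v w / dot3 w w) * w.2.2)

lemma proj3_orth (v w : ℝ × ℝ × ℝ) (hw : 0 < dot3 w w) : dot3 (proj3 v w) w = 0 := by
  obtain ⟨v1, v2, v3⟩ := v; obtain ⟨w1, w2, w3⟩ := w
  simp only [dot3, proj3] at *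
  have h0 : w1 * w1 + w2 * w2 + w3 * w3 ≠ 0 := ne_of_gt hw
  have h0' : w1 ^ 2 + w2 ^ 2 + w3 ^ 2 ≠ 0 := by nlinarith
  field_simp
  ring

lemma proj3_dot (v v' w : ℝ × ℝ × ℝ) (hw : 0 < dot3 w w) :
    dot3 (proj3 v w) (proj3 v' w) = dot3 v v' - dot3 v w * dot3 v' w / dot3 w w := by
  obtain ⟨v1, v2, v3⟩ := v; obtain ⟨p1, p2, p3⟩ := v'; obtain ⟨w1, w2, w3⟩ := w
  simp only [dot3, proj3] at *
  have h0 : w1 * w1 + w2 * w2 + w3 * w3 ≠ 0 := ne_of_gt hw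
  have h0' : w1 ^ 2 + w2 ^ 2 + w3 ^ 2 ≠ 0 := by nlinarith
  field_simp
  ring

lemma proj3_dot_neg (v v' w : ℝ × ℝ × ℝ) (hw : 0 < dot3 w w)
    (h : dot3 v v' < 0) (h1 : dot3 v w < 0) (h2 : dot3 v' w < 0) :
    dot3 (proj3 v w) (proj3 v' w) < 0 := by
  rw [proj3_dot v v' w hw]
  have : 0 < dot3 v w * dot3 v' w / dot3 w w := div_pos (mul_pos_of_neg_of_neg h1 h2) hw
  linarith

lemma proj3_orth_preserve (v w a : ℝ × ℝ × ℝ) (hv : dot3 v a = 0) (hw : dot3 w a = 0) :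
    dot3 (proj3 v w) a = 0 := by
  obtain ⟨v1, v2, v3⟩ := v; obtain ⟨w1, w2, w3⟩ := w; obtain ⟨a1, a2, a3⟩ := a
  simp only [dot3, proj3] at *
  linear_combination hv - ((v1 * w1 + v2 * w2 + v3 * w3) / (w1 * w1 + w2 * w2 + w3 * w3)) * hw

lemma pos_self_of_dot_neg (v v' : ℝ × ℝ × ℝ) (h : dot3 v v' < 0) : 0 < dot3 v v := by
  rcases (dot3_self_nonneg v).lt_or_eq with h' | h'
  · exact h'
  · exfalso
    nlinarith [dot3_cs v v', dot3_self_nonneg v', mul_pos_of_neg_of_neg h h]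

/-- No 5 vectors in ℝ³ with pairwise negative dot products. -/
lemma no_five (v0 v1 v2 v3 v4 : ℝ × ℝ × ℝ)
    (h01 : dot3 v0 v1 < 0) (h02 : dot3 v0 v2 < 0) (h03 : dot3 v0 v3 < 0) (h04 : dot3 v0 v4 < 0)
    (h12 : dot3 v1 v2 < 0) (h13 : dot3 v1 v3 < 0) (h14 : dot3 v1 v4 < 0)
    (h23 : dot3 v2 v3 < 0) (h24 : dot3 v2 v4 < 0) (h34 : dot3 v3 v4 < 0) : False := by
  have hv4 : 0 < dot3 v4 v4 := pos_self_of_dot_neg v4 v3 (by rwa [dot3_comm])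
  -- round 1: project v0..v3 orthogonal to v4
  set w0 := proj3 v0 v4 with hw0
  set w1 := proj3 v1 v4 with hw1
  set w2 := proj3 v2 v4 with hw2
  set w3 := proj3 v3 v4 with hw3
  have g01 : dot3 w0 w1 < 0 := proj3_dot_neg _ _ _ hv4 h01 h04 h14
  have g02 : dot3 w0 w2 < 0 := proj3_dot_neg _ _ _ hv4 h02 h04 h24
  have g03 : dot3 w0 w3 < 0 := proj3_dot_neg _ _ _ hv4 h03 h04 h34
  have g12 : dot3 w1 w2 < 0 := proj3_dot_neg _ _ _ hv4 h12 h14 h24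
  have g13 : dot3 w1 w3 < 0 := proj3_dot_neg _ _ _ hv4 h13 h14 h34
  have g23 : dot3 w2 w3 < 0 := proj3_dot_neg _ _ _ hv4 h23 h24 h34
  have o0 : dot3 w0 v4 = 0 := proj3_orth _ _ hv4
  have o1 : dot3 w1 v4 = 0 := proj3_orth _ _ hv4
  have o2 : dot3 w2 v4 = 0 := proj3_orth _ _ hv4
  have o3 : dot3 w3 v4 = 0 := proj3_orth _ _ hv4
  have hw3' : 0 < dot3 w3 w3 := pos_self_of_dot_neg w3 w2 (by rwa [dot3_comm])
  -- round 2: project w0..w2 orthogonal to w3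
  set u0 := proj3 w0 w3 with hu0
  set u1 := proj3 w1 w3 with hu1
  set u2 := proj3 w2 w3 with hu2
  have k01 : dot3 u0 u1 < 0 := proj3_dot_neg _ _ _ hw3' g01 g03 g13
  have k02 : dot3 u0 u2 < 0 := proj3_dot_neg _ _ _ hw3' g02 g03 g23
  have k12 : dot3 u1 u2 < 0 := proj3_dot_neg _ _ _ hw3' g12 g13 g23
  have p0 : dot3 u0 w3 = 0 := proj3_orth _ _ hw3'
  have p1 : dot3 u1 w3 = 0 := proj3_orth _ _ hw3'
  have p2 : dot3 u2 w3 = 0 := proj3_orth _ _ hw3'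
  have q0 : dot3 u0 v4 = 0 := proj3_orth_preserve _ _ _ o0 o3
  have q1 : dot3 u1 v4 = 0 := proj3_orth_preserve _ _ _ o1 o3
  have q2 : dot3 u2 v4 = 0 := proj3_orth_preserve _ _ _ o2 o3
  exact line_case u0 u1 u2 v4 w3 hv4 hw3' (by rwa [dot3_comm])
    q0 p0 q1 p1 q2 p2 k01 k02 k12



noncomputable def bloch (x : EuclideanSpace ℂ (Fin 2)) : ℝ × ℝ × ℝ :=
  (2 * ((x 0).re * (x 1).re + (x 0).im * (x 1).im),
   2 * ((x 0).re * (x 1).im - (x 0).im * (x 1).re),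
   (x 0).re ^ 2 + (x 0).im ^ 2 - (x 1).re ^ 2 - (x 1).im ^ 2)

lemma norm_sum_one (x : EuclideanSpace ℂ (Fin 2)) (h : ‖x‖ = 1) :
    (x 0).re ^ 2 + (x 0).im ^ 2 + (x 1).re ^ 2 + (x 1).im ^ 2 = 1 := by
  have h1 : ‖x‖ = Real.sqrt (∑ i, ‖x i‖ ^ 2) := EuclideanSpace.norm_eq x
  rw [h] at h1
  have h2 : (∑ i, ‖x i‖ ^ 2) = 1 := by
    have h3 : (0:ℝ) ≤ ∑ i, ‖x i‖ ^ 2 := by positivity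
    nlinarith [Real.sq_sqrt h3, h1.symm]
  rw [Fin.sum_univ_two] at h2
  simp only [Complex.sq_norm, Complex.normSq_apply] at h2
  nlinarith [h2]

lemma bloch_inner (x y : EuclideanSpace ℂ (Fin 2)) (hx : ‖x‖ = 1) (hy : ‖y‖ = 1) :
    2 * ‖(inner ℂ x y : ℂ)‖ ^ 2 = 1 + dot3 (bloch x) (bloch y) := by
  have hx' := norm_sum_one x hx
  have hy' := norm_sum_one y hy
  have hi : (inner ℂ x y : ℂ) = (starRingEnd ℂ) (x 0) * y 0 + (starRingEnd ℂ) (x 1) * y 1 := by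
    simp [PiLp.inner_apply, RCLike.inner_apply, Fin.sum_univ_two, mul_comm]
  rw [hi]
  simp only [Complex.sq_norm, Complex.normSq_apply, Complex.add_re,
    Complex.add_im, Complex.mul_re, Complex.mul_im, Complex.conj_re, Complex.conj_im,
    dot3, bloch]
  nlinarith [hx', hy']


lemma sqrt_half : Real.sqrt (1/2) = 1 / Real.sqrt 2 := by
  rw [show (1:ℝ)/2 = 2⁻¹ by norm_num, Real.sqrt_inv, one_div]

lemma norm_le_inv_sqrt2 (z : ℂ) (h : Complex.normSq z ≤ 1/2) : ‖z‖ ≤ 1 / Real.sqrt 2 := by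
  rw [Complex.norm_def, ← sqrt_half]
  exact Real.sqrt_le_sqrt h

lemma norm_eq_inv_sqrt2 (z : ℂ) (h : Complex.normSq z = 1/2) : ‖z‖ = 1 / Real.sqrt 2 := by
  rw [Complex.norm_def, h, sqrt_half]

noncomputable def rc : ℂ := ((Real.sqrt 2)⁻¹ : ℝ)

noncomputable def myphi : Fin 5 → EuclideanSpace ℂ (Fin 2) := fun j =>
  (WithLp.equiv 2 (Fin 2 → ℂ)).symm
    (![![1, 0], ![0, 1], ![rc, rc], ![rc, -rc], ![rc, rc * Complex.I]] j)

lemma hr2 : ((Real.sqrt 2)⁻¹ : ℝ) ^ 2 = 1/2 := by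
  rw [inv_pow, Real.sq_sqrt (by norm_num : (0:ℝ) ≤ 2)]
  norm_num

lemma myphi_norm : ∀ j, ‖myphi j‖ = 1 := by
  intro j
  rw [EuclideanSpace.norm_eq, Real.sqrt_eq_one]
  fin_cases j <;>
    simp [myphi, WithLp.equiv_symm_apply, Fin.sum_univ_two, rc,
      Complex.norm_real, abs_of_nonneg (by positivity : (0:ℝ) ≤ (Real.sqrt 2)⁻¹)] <;>
    nlinarith [hr2]

lemma inner_expand (x y : EuclideanSpace ℂ (Fin 2)) :
    (inner ℂ x y : ℂ) = (starRingEnd ℂ) (x 0) * y 0 + (starRingEnd ℂ) (x 1) * y 1 := by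
  simp [PiLp.inner_apply, RCLike.inner_apply, Fin.sum_univ_two, mul_comm]

lemma myphi_inner_le : ∀ j l : Fin 5, j ≠ l → ‖(inner ℂ (myphi j) (myphi l) : ℂ)‖ ≤ 1 / Real.sqrt 2 := by
  intro j l hjl
  rw [inner_expand]
  fin_cases j <;> fin_cases l <;>
    first
    | exact absurd rfl hjl
    | (apply norm_le_inv_sqrt2
       simp [myphi, WithLp.equiv_symm_apply, rc, Complex.normSq_apply, Complex.add_re,
         Complex.add_im, Complex.mul_re, Complex.mul_im, Complex.conj_re, Complex.conj_im,
         Complex.ofReal_re, Complex.ofReal_im, Complex.I_re, Complex.I_im, Complex.neg_re,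
         Complex.neg_im, Complex.conj_ofReal]
       try nlinarith [Real.sq_sqrt (show (0:ℝ) ≤ 2 by norm_num), Real.sqrt_nonneg 2])

lemma myphi_inner_eq : ‖(inner ℂ (myphi 0) (myphi 2) : ℂ)‖ = 1 / Real.sqrt 2 := by
  rw [inner_expand]
  apply norm_eq_inv_sqrt2
  simp [myphi, WithLp.equiv_symm_apply, rc, Complex.normSq_apply, Complex.add_re,
    Complex.add_im, Complex.mul_re, Complex.mul_im, Complex.conj_re, Complex.conj_im,
    Complex.ofReal_re, Complex.ofReal_im, Complex.conj_ofReal]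

/-- The Grassmannian constant `μ_{5,2}(ℂ)` equals `1/√2`: every set
of `5` unit vectors in `ℂ²` has coherence at least `1/√2`, and there exists a set of
`5` unit vectors in `ℂ²` whose coherence equals exactly `1/√2`. -/
theorem grassmannian_const_five_two :
    (∀ φ : Fin 5 → EuclideanSpace ℂ (Fin 2), (∀ j, ‖φ j‖ = 1) →
      ∃ j l, j ≠ l ∧ 1 / Real.sqrt 2 ≤ ‖(inner ℂ (φ j) (φ l) : ℂ)‖) ∧
    ∃ φ : Fin 5 → EuclideanSpace ℂ (Fin 2), (∀ j, ‖φ j‖ = 1) ∧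
      IsGreatest {r : ℝ | ∃ j l, j ≠ l ∧ ‖(inner ℂ (φ j) (φ l) : ℂ)‖ = r}
        (1 / Real.sqrt 2) := by
  constructor
  · intro φ hφ
    by_contra hcon
    push_neg at hcon
    have hd : ∀ j l : Fin 5, j ≠ l → dot3 (bloch (φ j)) (bloch (φ l)) < 0 := by
      intro j l hjl
      have h1 := bloch_inner (φ j) (φ l) (hφ j) (hφ l)
      have h2 := hcon j l hjl
      have h3 : ‖(inner ℂ (φ j) (φ l) : ℂ)‖ ^ 2 < 1/2 := by
        rw [sq]
        have e : (1/Real.sqrt 2) * (1/Real.sqrt 2) = 1/2 := by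
          rw [div_mul_div_comm, one_mul, Real.mul_self_sqrt (by norm_num : (0:ℝ) ≤ 2)]
        calc ‖(inner ℂ (φ j) (φ l) : ℂ)‖ * ‖(inner ℂ (φ j) (φ l) : ℂ)‖
            < (1/Real.sqrt 2) * (1/Real.sqrt 2) := mul_self_lt_mul_self (norm_nonneg _) h2
          _ = 1/2 := e
      linarith
    exact no_five (bloch (φ 0)) (bloch (φ 1)) (bloch (φ 2)) (bloch (φ 3)) (bloch (φ 4))
      (hd 0 1 (by decide)) (hd 0 2 (by decide)) (hd 0 3 (by decide)) (hd 0 4 (by decide))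
      (hd 1 2 (by decide)) (hd 1 3 (by decide)) (hd 1 4 (by decide))
      (hd 2 3 (by decide)) (hd 2 4 (by decide)) (hd 3 4 (by decide))
  · refine ⟨myphi, myphi_norm, ⟨0, 2, by decide, myphi_inner_eq⟩, ?_⟩
    rintro x ⟨j, l, hjl, rfl⟩
    exact myphi_inner_le j l hjl
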